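/- Let R be an n⁴ complex array obeying the quantum Yang–Baxter equation. Then for every m ≥ 1 and all multi-indices, ([m;R]!)^{j_1⋯j_m}_{i_1⋯i_m} = ([m;R₂₁]!)^{j_m⋯j_1}_{i_m⋯i_1}, i.e. the braided factorial of R equals the braided factorial of R₂₁ with both multi-indices reversed. -/

import Mathlib

open scoped ComplexConjugate

noncomputable section

/-- An n⁴ array `R^i{}_j{}^k{}_l` viewed as an n²×n² matrix with row index `(i,k)`,
column index `(j,l)`. -/
def toMat (n : ℕ) (R : Fin n → Fin n → Fin n → Fin n → ℂ) :
    Matrix (Fin n × Fin n) (Fin n × Fin n) ℂ :=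
  Matrix.of fun p q => R p.1 q.1 p.2 q.2

/-- Entries `(R⁻¹)^i{}_j{}^k{}_l` of the matrix inverse of `R`. -/
def invEntry (n : ℕ) (R : Fin n → Fin n → Fin n → Fin n → ℂ)
    (i j k l : Fin n) : ℂ :=
  (toMat n R)⁻¹ (i, k) (j, l)

/-- `R` is of real type I: `conj (R^i{}_j{}^k{}_l) = R^l{}_k{}^j{}_i`. -/
def RealTypeI (n : ℕ) (R : Fin n → Fin n → Fin n → Fin n → ℂ) : Prop :=
  ∀ i j k l, conj (R i j k l) = R l k j i

/-- `R` is of antireal type I: `R` invertible and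
`conj (R^i{}_j{}^k{}_l) = (R⁻¹)^j{}_i{}^l{}_k`. -/
def AntirealTypeI (n : ℕ) (R : Fin n → Fin n → Fin n → Fin n → ℂ) : Prop :=
  IsUnit (toMat n R) ∧ ∀ i j k l, conj (R i j k l) = invEntry n R j i l k

/-- `R` is of real type II w.r.t. the involution `σ`:
`conj (R^i{}_j{}^k{}_l) = R^{σk}{}_{σl}{}^{σi}{}_{σj}`. -/
def RealTypeII (n : ℕ) (R : Fin n → Fin n → Fin n → Fin n → ℂ)
    (σ : Fin n → Fin n) : Prop :=
  ∀ i j k l, conj (R i j k l) = R (σ k) (σ l) (σ i) (σ j)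

/-- `R` is of antireal type II w.r.t. the involution `σ`: `R` invertible and
`conj (R^i{}_j{}^k{}_l) = (R⁻¹)^{σi}{}_{σj}{}^{σk}{}_{σl}`. -/
def AntirealTypeII (n : ℕ) (R : Fin n → Fin n → Fin n → Fin n → ℂ)
    (σ : Fin n → Fin n) : Prop :=
  IsUnit (toMat n R) ∧
    ∀ i j k l, conj (R i j k l) = invEntry n R (σ i) (σ j) (σ k) (σ l)

/-- The metric `η` (entries `η^{ij} = η i j`) is `R`-covariant:
`Σ η^{ia} η^{jb} R^k{}_a{}^l{}_b = Σ R^i{}_a{}^j{}_b η^{ak} η^{bl}`. -/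
def MetricCovariant (n : ℕ) (R : Fin n → Fin n → Fin n → Fin n → ℂ)
    (η : Matrix (Fin n) (Fin n) ℂ) : Prop :=
  ∀ i j k l, (∑ a : Fin n, ∑ b : Fin n, η i a * η j b * R k a l b) =
    ∑ a : Fin n, ∑ b : Fin n, R i a j b * η a k * η b l

/-- The metric `η` is real: `conj (η^{ij}) = η_{ji}`, where the lower-index entries
`η_{ij}` are those of the transposed inverse, i.e. `η_{ji} = (η⁻¹) i j`. -/
def MetricReal (n : ℕ) (η : Matrix (Fin n) (Fin n) ℂ) : Prop :=
  ∀ i j, conj (η i j) = η⁻¹ i j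

/-- The matrix `PR` on ℂⁿ⊗ℂⁿ: `(PR)^i{}_j{}^k{}_l = R^k{}_j{}^i{}_l`. -/
def PRmat (n : ℕ) (R : Fin n → Fin n → Fin n → Fin n → ℂ) :
    Matrix (Fin n × Fin n) (Fin n × Fin n) ℂ :=
  Matrix.of fun p q => R p.2 q.1 p.1 q.2

/-- The matrix `A_{k+1,k+2}` on `(ℂⁿ)^{⊗m}` acting as the two-site matrix `A` in the
(0-indexed) tensor factors `k, k+1` and as the identity elsewhere (the identity
matrix if `k+1 ≥ m`). -/
def site (n m : ℕ) (A : Matrix (Fin n × Fin n) (Fin n × Fin n) ℂ) (k : ℕ) :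
    Matrix (Fin m → Fin n) (Fin m → Fin n) ℂ :=
  if h : k + 1 < m then
    Matrix.of fun f g =>
      A (f ⟨k, Nat.lt_of_succ_lt h⟩, f ⟨k + 1, h⟩)
        (g ⟨k, Nat.lt_of_succ_lt h⟩, g ⟨k + 1, h⟩) *
      ∏ t : Fin m,
        (if t.1 = k ∨ t.1 = k + 1 then (1 : ℂ) else if f t = g t then 1 else 0)
  else 1

/-- The ordered product `A_{off+1,off+2} A_{off+2,off+3} ⋯ A_{off+r,off+r+1}`
(1-indexed tensor positions) on `(ℂⁿ)^{⊗m}`; the identity for `r = 0`. -/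
def chain (n m : ℕ) (A : Matrix (Fin n × Fin n) (Fin n × Fin n) ℂ)
    (off r : ℕ) : Matrix (Fin m → Fin n) (Fin m → Fin n) ℂ :=
  ((List.range r).map fun s => site n m A (off + s)).prod

/-- The reversed ordered product `A_{off+r,off+r+1} ⋯ A_{off+2,off+3} A_{off+1,off+2}`
on `(ℂⁿ)^{⊗m}`; the identity for `r = 0`. -/
def chainOp (n m : ℕ) (A : Matrix (Fin n × Fin n) (Fin n × Fin n) ℂ)
    (off r : ℕ) : Matrix (Fin m → Fin n) (Fin m → Fin n) ℂ :=
  (((List.range r).reverse).map fun s => site n m A (off + s)).prod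

/-- The braided integer `[k;R]` acting in the tensor factors `off+1,…,off+k`
(1-indexed) of `(ℂⁿ)^{⊗m}`:
`[k;R] = Σ_{r=0}^{k−1} (PR)_{12}(PR)_{23}⋯(PR)_{r,r+1}` (shifted by `off`). -/
def braidedInt (n m : ℕ) (R : Fin n → Fin n → Fin n → Fin n → ℂ)
    (off k : ℕ) : Matrix (Fin m → Fin n) (Fin m → Fin n) ℂ :=
  ∑ r ∈ Finset.range k, chain n m (PRmat n R) off r

/-- The opposite braided integer `[k;R]^{op}` acting in the tensor factors
`off+1,…,off+k` of `(ℂⁿ)^{⊗m}`: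
`[k;R]^{op} = Σ_{r=0}^{k−1} (PR)_{r,r+1}⋯(PR)_{23}(PR)_{12}` (shifted by `off`). -/
def braidedIntOp (n m : ℕ) (R : Fin n → Fin n → Fin n → Fin n → ℂ)
    (off k : ℕ) : Matrix (Fin m → Fin n) (Fin m → Fin n) ℂ :=
  ∑ r ∈ Finset.range k, chainOp n m (PRmat n R) off r

/-- The braided factorial `[m;R]! = [2;R]_{m−1,m} [3;R]_{m−2,…,m} ⋯ [m;R]_{1,…,m}`
on `(ℂⁿ)^{⊗m}`. -/
def braidedFact (n m : ℕ) (R : Fin n → Fin n → Fin n → Fin n → ℂ) :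
    Matrix (Fin m → Fin n) (Fin m → Fin n) ℂ :=
  ((List.range (m - 1)).map fun t => braidedInt n m R (m - (t + 2)) (t + 2)).prod

/-- The opposite braided factorial
`[m;R]^{op}! = [m;R]^{op}_{1,…,m} ⋯ [3;R]^{op}_{m−2,…,m} [2;R]^{op}_{m−1,m}`. -/
def braidedFactOp (n m : ℕ) (R : Fin n → Fin n → Fin n → Fin n → ℂ) :
    Matrix (Fin m → Fin n) (Fin m → Fin n) ℂ :=
  (((List.range (m - 1)).reverse).map fun t =>
    braidedIntOp n m R (m - (t + 2)) (t + 2)).prod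

/-- `R₁₂` on ℂⁿ⊗ℂⁿ⊗ℂⁿ. -/
def Rmat12 (n : ℕ) (R : Fin n → Fin n → Fin n → Fin n → ℂ) :
    Matrix (Fin n × Fin n × Fin n) (Fin n × Fin n × Fin n) ℂ :=
  Matrix.of fun p q =>
    R p.1 q.1 p.2.1 q.2.1 * (if p.2.2 = q.2.2 then 1 else 0)

/-- `R₁₃` on ℂⁿ⊗ℂⁿ⊗ℂⁿ. -/
def Rmat13 (n : ℕ) (R : Fin n → Fin n → Fin n → Fin n → ℂ) :
    Matrix (Fin n × Fin n × Fin n) (Fin n × Fin n × Fin n) ℂ :=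
  Matrix.of fun p q =>
    R p.1 q.1 p.2.2 q.2.2 * (if p.2.1 = q.2.1 then 1 else 0)

/-- `R₂₃` on ℂⁿ⊗ℂⁿ⊗ℂⁿ. -/
def Rmat23 (n : ℕ) (R : Fin n → Fin n → Fin n → Fin n → ℂ) :
    Matrix (Fin n × Fin n × Fin n) (Fin n × Fin n × Fin n) ℂ :=
  Matrix.of fun p q =>
    (if p.1 = q.1 then (1 : ℂ) else 0) * R p.2.1 q.2.1 p.2.2 q.2.2

/-- The quantum Yang–Baxter equation `R₁₂R₁₃R₂₃ = R₂₃R₁₃R₁₂`. -/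
def QYBE (n : ℕ) (R : Fin n → Fin n → Fin n → Fin n → ℂ) : Prop :=
  Rmat12 n R * Rmat13 n R * Rmat23 n R = Rmat23 n R * Rmat13 n R * Rmat12 n R

/-- The array `R₂₁`, with `R₂₁^i{}_j{}^k{}_l = R^k{}_l{}^i{}_j`. -/
def swapR (n : ℕ) (R : Fin n → Fin n → Fin n → Fin n → ℂ) :
    Fin n → Fin n → Fin n → Fin n → ℂ :=
  fun i j k l => R k l i j

/-BLOB START-/


section BraidAlg

variable {A : Type*} [Ring A] (B : ℕ → A)

def ascP (a r : ℕ) : A := ((List.range r).map fun s => B (a+s)).prod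

def dscP (c r : ℕ) : A := ((List.range r).reverse.map fun s => B (c+s)).prod

@[simp] lemma ascP_zero (a : ℕ) : ascP B a 0 = 1 := rfl
@[simp] lemma dscP_zero (c : ℕ) : dscP B c 0 = 1 := rfl

lemma ascP_succ (a r : ℕ) : ascP B a (r+1) = ascP B a r * B (a+r) := by
  simp [ascP, List.range_succ]

lemma dscP_cons (c r : ℕ) : dscP B c (r+1) = B (c+r) * dscP B c r := by
  simp [dscP, List.range_succ]

lemma ascP_cons (a r : ℕ) : ascP B a (r+1) = B a * ascP B (a+1) r := by
  induction r with
  | zero => simp [ascP_succ]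
  | succ r ih =>
      rw [ascP_succ, ih, mul_assoc]
      congr 1
      rw [show a + (r+1) = (a+1) + r by omega, ← ascP_succ]

lemma dscP_snoc (c r : ℕ) : dscP B c (r+1) = dscP B (c+1) r * B c := by
  induction r with
  | zero => simp [dscP_cons]
  | succ r ih =>
      rw [dscP_cons, ih, ← mul_assoc]
      congr 1
      rw [show c + (r+1) = (c+1) + r by omega, ← dscP_cons]

lemma ascP_append (a r s : ℕ) : ascP B a (r+s) = ascP B a r * ascP B (a+r) s := by
  induction s with
  | zero => simp
  | succ s ih => rw [← Nat.add_assoc, ascP_succ, ih, ascP_succ, mul_assoc, Nat.add_assoc]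

section Rel

variable (W : ℕ)
  (hbr : ∀ k, k + 1 ≤ W → B k * B (k+1) * B k = B (k+1) * B k * B (k+1))
  (hc : ∀ k l, k + 2 ≤ l → B k * B l = B l * B k)

include hc in
lemma comm_ascP_low (j a r : ℕ) (h : j + 2 ≤ a) : B j * ascP B a r = ascP B a r * B j := by
  induction r with
  | zero => simp
  | succ r ih =>
      rw [ascP_succ, ← mul_assoc, ih, mul_assoc, hc j (a+r) (by omega), ← mul_assoc]

include hc in
lemma comm_dscP_low (j c r : ℕ) (h : j + 2 ≤ c) : B j * dscP B c r = dscP B c r * B j := by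
  induction r with
  | zero => simp
  | succ r ih =>
      rw [dscP_cons, ← mul_assoc, hc j (c+r) (by omega), mul_assoc, ih, ← mul_assoc]

include hc in
lemma ascP_comm_dscP (a r c q : ℕ) (h : a + r + 1 ≤ c) :
    ascP B a r * dscP B c q = dscP B c q * ascP B a r := by
  induction r with
  | zero => simp
  | succ r ih =>
      rw [ascP_succ, mul_assoc, comm_dscP_low B hc (a+r) c q (by omega), ← mul_assoc,
        ih (by omega), mul_assoc]

include hbr hc in
lemma ascP_shift : ∀ r a j, a ≤ j → j + 2 ≤ a + r → a + r ≤ W + 1 →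
    ascP B a r * B j = B (j+1) * ascP B a r := by
  intro r
  induction r with
  | zero => intro a j h1 h2 h3; omega
  | succ r ih =>
      intro a j h1 h2 h3
      rcases eq_or_lt_of_le h1 with rfl | hlt
      · -- j = a
        obtain ⟨r', rfl⟩ : ∃ r', r = r' + 1 := ⟨r - 1, by omega⟩
        rw [ascP_cons, ascP_cons B (a+1)]
        calc B a * (B (a+1) * ascP B (a+2) r') * B a
            = B a * B (a+1) * (ascP B (a+2) r' * B a) := by
              simp only [mul_assoc]
          _ = B a * B (a+1) * (B a * ascP B (a+2) r') := by
              rw [comm_ascP_low B hc a (a+2) r' (by omega)]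
          _ = (B a * B (a+1) * B a) * ascP B (a+2) r' := by
              simp only [mul_assoc]
          _ = (B (a+1) * B a * B (a+1)) * ascP B (a+2) r' := by
              rw [hbr a (by omega)]
          _ = B (a+1) * (B a * (B (a+1) * ascP B (a+2) r')) := by
              simp only [mul_assoc]
      · -- a < j
        rw [ascP_cons, mul_assoc, ih (a+1) j (by omega) (by omega) (by omega),
          ← mul_assoc, hc a (j+1) (by omega), mul_assoc]

include hbr hc in
lemma dscP_shift : ∀ r c j, c ≤ j → j + 2 ≤ c + r → c + r ≤ W + 1 →
    dscP B c r * B (j+1) = B j * dscP B c r := by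
  intro r
  induction r with
  | zero => intro c j h1 h2 h3; omega
  | succ r ih =>
      intro c j h1 h2 h3
      rcases eq_or_lt_of_le h1 with rfl | hlt
      · -- j = c
        obtain ⟨r', rfl⟩ : ∃ r', r = r' + 1 := ⟨r - 1, by omega⟩
        rw [dscP_snoc, dscP_snoc B (c+1)]
        calc dscP B (c+2) r' * B (c+1) * B c * B (c+1)
            = dscP B (c+2) r' * (B (c+1) * B c * B (c+1)) := by
              simp only [mul_assoc]
          _ = dscP B (c+2) r' * (B c * B (c+1) * B c) := by rw [← hbr c (by omega)]
          _ = (dscP B (c+2) r' * B c) * (B (c+1) * B c) := by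
              simp only [mul_assoc]
          _ = (B c * dscP B (c+2) r') * (B (c+1) * B c) := by
              rw [← comm_dscP_low B hc c (c+2) r' (by omega)]
          _ = B c * (dscP B (c+2) r' * B (c+1) * B c) := by
              simp only [mul_assoc]
      · -- c < j
        rw [dscP_snoc, mul_assoc, hc c (j+1) (by omega), ← mul_assoc,
          ih (c+1) j (by omega) (by omega) (by omega), mul_assoc]

include hbr hc in
lemma dscP_ascP_shift (c r : ℕ) : ∀ t, t + 1 ≤ r → c + r ≤ W + 1 →
    dscP B c r * ascP B (c+1) t = ascP B c t * dscP B c r := by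
  intro t
  induction t with
  | zero => intro _ _; simp
  | succ t ih =>
      intro ht hW
      rw [ascP_succ, ← mul_assoc, ih (by omega) hW, mul_assoc,
        show c + 1 + t = (c + t) + 1 by omega,
        dscP_shift B W hbr hc r c (c+t) (by omega) (by omega) hW,
        ← mul_assoc, ← ascP_succ]

include hbr hc in
lemma shiftMain (a e p q : ℕ) (hp : p ≤ q) (hW : a + e + q ≤ W) :
    dscP B (a+e+1) q * ascP B a (e+1+p) = ascP B a (e+p) * dscP B (a+e) (q+1) := by
  have h1 : ascP B a (e+1+p) = ascP B a e * (B (a+e) * ascP B (a+e+1) p) := by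
    rw [show e+1+p = e+(1+p) by omega, ascP_append, show 1+p = p+1 by omega, ascP_cons]
  rw [h1]
  calc dscP B (a+e+1) q * (ascP B a e * (B (a+e) * ascP B (a+e+1) p))
      = (dscP B (a+e+1) q * ascP B a e) * (B (a+e) * ascP B (a+e+1) p) := by
        simp only [mul_assoc]
    _ = (ascP B a e * dscP B (a+e+1) q) * (B (a+e) * ascP B (a+e+1) p) := by
        rw [← ascP_comm_dscP B hc a e (a+e+1) q (by omega)]
    _ = ascP B a e * ((dscP B ((a+e)+1) q * B (a+e)) * ascP B ((a+e)+1) p) := by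
        simp only [mul_assoc]
    _ = ascP B a e * (dscP B (a+e) (q+1) * ascP B ((a+e)+1) p) := by
        rw [← dscP_snoc]
    _ = ascP B a e * (ascP B (a+e) p * dscP B (a+e) (q+1)) := by
        rw [dscP_ascP_shift B W hbr hc (a+e) (q+1) p (by omega) (by omega)]
    _ = ascP B a (e+p) * dscP B (a+e) (q+1) := by
        rw [← mul_assoc, ← ascP_append]

end Rel

def IupP (a len : ℕ) : A := ∑ r ∈ Finset.range (len+1), ascP B a r

def KTP (n1 q : ℕ) : A := ∑ r ∈ Finset.range (q+1), dscP B (n1 - r) r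

section Rel2

variable (W : ℕ)
  (hbr : ∀ k, k + 1 ≤ W → B k * B (k+1) * B k = B (k+1) * B k * B (k+1))
  (hc : ∀ k l, k + 2 ≤ l → B k * B l = B l * B k)

include hbr hc in
lemma microM (a d : ℕ) (hW : a + d ≤ W) :
    KTP B (a+d+1) d * IupP B a (d+1) = IupP B a d * KTP B (a+d+1) (d+1) := by
  unfold KTP IupP
  rw [Finset.sum_mul_sum, Finset.sum_mul_sum]
  rw [← Finset.sum_product', ← Finset.sum_product']
  refine Finset.sum_nbij'
    (i := fun x => if x.2 + x.1 ≤ d then (x.2, x.1) else (x.2 - 1, x.1 + 1))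
    (j := fun y => if y.1 + y.2 ≤ d then (y.2, y.1) else (y.2 - 1, y.1 + 1))
    ?_ ?_ ?_ ?_ ?_
  · intro x hx
    simp only [Finset.mem_product, Finset.mem_range] at hx ⊢
    split <;> omega
  · intro y hy
    simp only [Finset.mem_product, Finset.mem_range] at hy ⊢
    split <;> omega
  · intro x hx
    simp only [Finset.mem_product, Finset.mem_range] at hx
    by_cases h : x.2 + x.1 ≤ d
    · rw [if_pos h, if_pos (by omega)]
    · rw [if_neg h, if_neg (by omega)]
      have hx2 : 1 ≤ x.2 := by omega
      ext <;> dsimp <;> omega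
  · intro y hy
    simp only [Finset.mem_product, Finset.mem_range] at hy
    by_cases h : y.1 + y.2 ≤ d
    · rw [if_pos h, if_pos (by omega)]
    · rw [if_neg h, if_neg (by omega)]
      have hy1 : 1 ≤ y.2 := by omega
      ext <;> dsimp <;> omega
  · intro x hx
    simp only [Finset.mem_product, Finset.mem_range] at hx
    by_cases h : x.2 + x.1 ≤ d
    · rw [if_pos h]
      exact (ascP_comm_dscP B hc a x.2 (a+d+1-x.1) x.1 (by omega)).symm
    · rw [if_neg h]
      have he : a + d + 1 - x.1 = a + (d - x.1) + 1 := by omega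
      have hx2 : x.2 = (d - x.1) + 1 + (x.2 - (d - x.1) - 1) := by omega
      conv_lhs => rw [he, hx2]
      rw [shiftMain B W hbr hc a (d - x.1) (x.2 - (d - x.1) - 1) x.1
        (by omega) (by omega)]
      have h1 : d - x.1 + (x.2 - (d - x.1) - 1) = x.2 - 1 := by omega
      have h2 : a + (d - x.1) = a + d + 1 - (x.1 + 1) := by omega
      rw [h1, h2]

end Rel2

def PPdP (N d : ℕ) : A := ((List.range d).map fun t => IupP B (N-t) (t+1)).prod

def QQdP (N d : ℕ) : A := ((List.range d).map fun t => IupP B (N-t) t).prod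

@[simp] lemma IupP_zero (a : ℕ) : IupP B a 0 = 1 := by simp [IupP]

lemma QQdP_eq_PPdP (N d : ℕ) : QQdP B (N+1) (d+1) = PPdP B N d := by
  unfold QQdP PPdP
  rw [List.range_succ_eq_map]
  simp only [List.map_cons, List.map_map, List.prod_cons, IupP_zero, one_mul]
  congr 1
  apply List.map_congr_left
  intro u _
  simp only [Function.comp_apply]
  congr 1
  omega

section Rel3

variable (W : ℕ)
  (hbr : ∀ k, k + 1 ≤ W → B k * B (k+1) * B k = B (k+1) * B k * B (k+1))
  (hc : ∀ k l, k + 2 ≤ l → B k * B l = B l * B k)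

include hbr hc in
lemma lemmaLm : ∀ d, d ≤ W + 1 → PPdP B W d = QQdP B W d * KTP B (W+1) d := by
  intro d
  induction d with
  | zero => simp [PPdP, QQdP, KTP, dscP]
  | succ d ih =>
      intro hd
      have hstep : PPdP B W (d+1) = PPdP B W d * IupP B (W-d) (d+1) := by
        unfold PPdP; rw [List.range_succ]; simp
      rw [hstep, ih (by omega), mul_assoc]
      have ha : W - d + d = W := by omega
      have := microM B W hbr hc (W-d) d (by omega)
      rw [ha] at this
      rw [this, ← mul_assoc]
      congr 1
      unfold QQdP; rw [List.range_succ]; simp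

end Rel3

lemma theoremGN : ∀ N,
    (∀ k, k + 1 ≤ N → B k * B (k+1) * B k = B (k+1) * B k * B (k+1)) →
    (∀ k l, k + 2 ≤ l → B k * B l = B l * B k) →
    PPdP B N (N+1) = ((List.range (N+1)).map fun t => KTP B (t+1) (t+1)).prod := by
  intro N
  induction N with
  | zero =>
      intro _ _
      simp [PPdP, IupP, KTP, ascP, dscP, Finset.sum_range_succ, List.range_succ]
  | succ N ih =>
      intro hbr hc
      rw [lemmaLm B (N+1) hbr hc (N+2) (by omega), QQdP_eq_PPdP,
        ih (fun k hk => hbr k (by omega)) hc]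
      rw [List.range_succ (n := N+1)]
      simp

end BraidAlg

/-SITE-/


noncomputable section

variable {n m : ℕ}

lemma prodE (k : ℕ) (f g : Fin m → Fin n) :
    (∏ t : Fin m, (if t.1 = k ∨ t.1 = k+1 then (1:ℂ) else if f t = g t then 1 else 0))
    = if (∀ t : Fin m, ¬(t.1 = k ∨ t.1 = k+1) → f t = g t) then 1 else 0 := by
  by_cases h : ∀ t : Fin m, ¬(t.1 = k ∨ t.1 = k+1) → f t = g t
  · rw [if_pos h]
    apply Finset.prod_eq_one
    intro t _
    by_cases hp : t.1 = k ∨ t.1 = k+1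
    · simp [hp]
    · simp [hp, h t hp]
  · rw [if_neg h]
    push_neg at h
    obtain ⟨t, hp, hne⟩ := h
    apply Finset.prod_eq_zero (Finset.mem_univ t)
    simp [hp, hne]

lemma site_apply (A : Matrix (Fin n × Fin n) (Fin n × Fin n) ℂ) (k : ℕ) (hk : k + 1 < m)
    (f g : Fin m → Fin n) :
    site n m A k f g = A (f ⟨k, Nat.lt_of_succ_lt hk⟩, f ⟨k+1, hk⟩)
      (g ⟨k, Nat.lt_of_succ_lt hk⟩, g ⟨k+1, hk⟩) *
      (if (∀ t : Fin m, ¬(t.1 = k ∨ t.1 = k+1) → f t = g t) then 1 else 0) := by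
  unfold site
  rw [dif_pos hk]
  simp only [Matrix.of_apply]
  rw [prodE]

lemma site_one (A : Matrix (Fin n × Fin n) (Fin n × Fin n) ℂ) (k : ℕ) (hk : ¬ k + 1 < m) :
    site n m A k = 1 := dif_neg hk

def upd2 (k : ℕ) (hk : k + 1 < m) (f : Fin m → Fin n) (a b : Fin n) : Fin m → Fin n :=
  Function.update (Function.update f ⟨k, Nat.lt_of_succ_lt hk⟩ a) ⟨k+1, hk⟩ b

lemma upd2_left (k : ℕ) (hk : k + 1 < m) (f : Fin m → Fin n) (a b : Fin n) :
    upd2 k hk f a b ⟨k, Nat.lt_of_succ_lt hk⟩ = a := by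
  unfold upd2
  rw [Function.update_of_ne (by simp [Fin.ext_iff]), Function.update_self]

lemma upd2_right (k : ℕ) (hk : k + 1 < m) (f : Fin m → Fin n) (a b : Fin n) :
    upd2 k hk f a b ⟨k+1, hk⟩ = b := by
  unfold upd2
  rw [Function.update_self]

lemma upd2_other (k : ℕ) (hk : k + 1 < m) (f : Fin m → Fin n) (a b : Fin n)
    (t : Fin m) (h : ¬(t.1 = k ∨ t.1 = k+1)) :
    upd2 k hk f a b t = f t := by
  push_neg at h
  unfold upd2
  rw [Function.update_of_ne (by simp [Fin.ext_iff]; omega),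
    Function.update_of_ne (by simp [Fin.ext_iff]; omega)]

lemma upd2_eval (k : ℕ) (hk : k + 1 < m) (f : Fin m → Fin n) (a b : Fin n)
    (t : Fin m) (h : t.1 = k ∨ t.1 = k+1) :
    upd2 k hk f a b t = if t.1 = k then a else b := by
  rcases h with h | h
  · have : t = ⟨k, Nat.lt_of_succ_lt hk⟩ := Fin.ext h
    subst this
    simp [upd2_left, h]
  · have : t = ⟨k+1, hk⟩ := Fin.ext h
    subst this
    rw [upd2_right, if_neg (by omega)]

lemma sum_delta (k : ℕ) (hk : k + 1 < m) (f : Fin m → Fin n)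
    (Φ : (Fin m → Fin n) → ℂ) :
    ∑ h : Fin m → Fin n,
      (if (∀ t : Fin m, ¬(t.1 = k ∨ t.1 = k+1) → f t = h t) then (1:ℂ) else 0) * Φ h
    = ∑ p : Fin n × Fin n, Φ (upd2 k hk f p.1 p.2) := by
  simp only [ite_mul, one_mul, zero_mul]
  rw [← Finset.sum_filter]
  refine Finset.sum_nbij'
    (i := fun h => ((h ⟨k, Nat.lt_of_succ_lt hk⟩, h ⟨k+1, hk⟩) : Fin n × Fin n))
    (j := fun p => upd2 k hk f p.1 p.2) ?_ ?_ ?_ ?_ ?_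
  · intro h _; exact Finset.mem_univ _
  · intro p _
    simp only [Finset.mem_filter, Finset.mem_univ, true_and]
    intro t ht
    exact (upd2_other k hk f p.1 p.2 t ht).symm
  · intro h hmem
    simp only [Finset.mem_filter, Finset.mem_univ, true_and] at hmem
    dsimp only
    funext t
    by_cases ht : t.1 = k ∨ t.1 = k+1
    · rw [upd2_eval k hk f _ _ t ht]
      rcases ht with ht | ht
      · rw [if_pos ht]; congr 1; exact (Fin.ext ht).symm
      · rw [if_neg (by omega)]; congr 1; exact (Fin.ext ht).symm
    · rw [upd2_other k hk f _ _ t ht]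
      exact hmem t ht
  · intro p _
    rw [upd2_left, upd2_right]
  · intro h hmem
    simp only [Finset.mem_filter, Finset.mem_univ, true_and] at hmem
    dsimp only
    congr 1
    funext t
    by_cases ht : t.1 = k ∨ t.1 = k+1
    · rw [upd2_eval k hk f _ _ t ht]
      rcases ht with ht | ht
      · rw [if_pos ht]; congr 1; exact Fin.ext ht
      · rw [if_neg (by omega)]; congr 1; exact Fin.ext ht
    · rw [upd2_other k hk f _ _ t ht]
      exact (hmem t ht).symm

lemma sum_delta' (k : ℕ) (hk : k + 1 < m) (g : Fin m → Fin n)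
    (Φ : (Fin m → Fin n) → ℂ) :
    ∑ h : Fin m → Fin n,
      Φ h * (if (∀ t : Fin m, ¬(t.1 = k ∨ t.1 = k+1) → h t = g t) then (1:ℂ) else 0)
    = ∑ p : Fin n × Fin n, Φ (upd2 k hk g p.1 p.2) := by
  rw [← sum_delta k hk g Φ]
  apply Finset.sum_congr rfl
  intro h _
  rw [mul_comm]
  congr 1
  apply if_congr _ rfl rfl
  constructor
  · intro H t ht; exact (H t ht).symm
  · intro H t ht; exact (H t ht).symm

lemma site_mul_apply (A : Matrix (Fin n × Fin n) (Fin n × Fin n) ℂ) (k : ℕ) (hk : k + 1 < m)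
    (X : Matrix (Fin m → Fin n) (Fin m → Fin n) ℂ) (f g : Fin m → Fin n) :
    (site n m A k * X) f g = ∑ p : Fin n × Fin n,
      A (f ⟨k, Nat.lt_of_succ_lt hk⟩, f ⟨k+1, hk⟩) p * X (upd2 k hk f p.1 p.2) g := by
  rw [Matrix.mul_apply]
  have step1 : ∀ h : Fin m → Fin n, site n m A k f h * X h g =
      (if (∀ t : Fin m, ¬(t.1 = k ∨ t.1 = k+1) → f t = h t) then (1:ℂ) else 0) *
        (A (f ⟨k, Nat.lt_of_succ_lt hk⟩, f ⟨k+1, hk⟩)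
          (h ⟨k, Nat.lt_of_succ_lt hk⟩, h ⟨k+1, hk⟩) * X h g) := by
    intro h
    rw [site_apply A k hk]
    ring
  rw [Finset.sum_congr rfl (fun h _ => step1 h),
    sum_delta k hk f (fun h => A (f ⟨k, Nat.lt_of_succ_lt hk⟩, f ⟨k+1, hk⟩)
      (h ⟨k, Nat.lt_of_succ_lt hk⟩, h ⟨k+1, hk⟩) * X h g)]
  apply Finset.sum_congr rfl
  intro p _
  rw [upd2_left, upd2_right]

lemma mul_site_apply (A : Matrix (Fin n × Fin n) (Fin n × Fin n) ℂ) (k : ℕ) (hk : k + 1 < m)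
    (X : Matrix (Fin m → Fin n) (Fin m → Fin n) ℂ) (f g : Fin m → Fin n) :
    (X * site n m A k) f g = ∑ p : Fin n × Fin n,
      X f (upd2 k hk g p.1 p.2) * A p (g ⟨k, Nat.lt_of_succ_lt hk⟩, g ⟨k+1, hk⟩) := by
  rw [Matrix.mul_apply]
  have step1 : ∀ h : Fin m → Fin n, X f h * site n m A k h g =
      (X f h * A (h ⟨k, Nat.lt_of_succ_lt hk⟩, h ⟨k+1, hk⟩)
        (g ⟨k, Nat.lt_of_succ_lt hk⟩, g ⟨k+1, hk⟩)) *
      (if (∀ t : Fin m, ¬(t.1 = k ∨ t.1 = k+1) → h t = g t) then (1:ℂ) else 0) := by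
    intro h
    rw [site_apply A k hk]
    ring
  rw [Finset.sum_congr rfl (fun h _ => step1 h),
    sum_delta' k hk g (fun h => X f h * A (h ⟨k, Nat.lt_of_succ_lt hk⟩, h ⟨k+1, hk⟩)
      (g ⟨k, Nat.lt_of_succ_lt hk⟩, g ⟨k+1, hk⟩))]
  apply Finset.sum_congr rfl
  intro p _
  rw [upd2_left, upd2_right]

end

noncomputable section
variable {n m : ℕ}

lemma ite_and3 (P Q S : Prop) [Decidable P] [Decidable Q] [Decidable S] :
    (if P ∧ Q ∧ S then (1:ℂ) else 0)
      = (if P then 1 else 0) * (if Q then 1 else 0) * (if S then 1 else 0) := by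
  by_cases hP : P <;> by_cases hQ : Q <;> by_cases hS : S <;> simp [hP, hQ, hS]

lemma site_mul_site (A A' : Matrix (Fin n × Fin n) (Fin n × Fin n) ℂ) (k l : ℕ)
    (hk : k + 1 < m) (hl : l + 1 < m) (hd : k + 2 ≤ l ∨ l + 2 ≤ k) (f g : Fin m → Fin n) :
    (site n m A k * site n m A' l) f g =
      A (f ⟨k, Nat.lt_of_succ_lt hk⟩, f ⟨k+1, hk⟩) (g ⟨k, Nat.lt_of_succ_lt hk⟩, g ⟨k+1, hk⟩) *
      A' (f ⟨l, Nat.lt_of_succ_lt hl⟩, f ⟨l+1, hl⟩) (g ⟨l, Nat.lt_of_succ_lt hl⟩, g ⟨l+1, hl⟩) *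
      (if (∀ t : Fin m, ¬(t.1 = k ∨ t.1 = k+1 ∨ t.1 = l ∨ t.1 = l+1) → f t = g t)
        then 1 else 0) := by
  rw [site_mul_apply A k hk]
  have key : ∀ p : Fin n × Fin n,
      site n m A' l (upd2 k hk f p.1 p.2) g =
        A' (f ⟨l, Nat.lt_of_succ_lt hl⟩, f ⟨l+1, hl⟩)
           (g ⟨l, Nat.lt_of_succ_lt hl⟩, g ⟨l+1, hl⟩) *
        ((if p.1 = g ⟨k, Nat.lt_of_succ_lt hk⟩ then (1:ℂ) else 0) *
         (if p.2 = g ⟨k+1, hk⟩ then (1:ℂ) else 0) *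
         (if (∀ t : Fin m, ¬(t.1 = k ∨ t.1 = k+1 ∨ t.1 = l ∨ t.1 = l+1) → f t = g t)
            then (1:ℂ) else 0)) := by
    intro p
    rw [site_apply A' l hl,
      upd2_other k hk f p.1 p.2 ⟨l, Nat.lt_of_succ_lt hl⟩ (by simp <;> omega),
      upd2_other k hk f p.1 p.2 ⟨l+1, hl⟩ (by simp <;> omega), ← ite_and3]
    congr 1
    apply if_congr _ rfl rfl
    constructor
    · intro H
      refine ⟨?_, ?_, ?_⟩
      · have h1 := H ⟨k, Nat.lt_of_succ_lt hk⟩ (by simp <;> omega)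
        rwa [upd2_left] at h1
      · have h1 := H ⟨k+1, hk⟩ (by simp <;> omega)
        rwa [upd2_right] at h1
      · intro t ht
        push_neg at ht
        have h1 := H t (by simp <;> omega)
        rwa [upd2_other k hk f p.1 p.2 t (by simp <;> omega)] at h1
    · rintro ⟨h1, h2, h3⟩ t ht
      push_neg at ht
      by_cases htk : t.1 = k
      · have : t = ⟨k, Nat.lt_of_succ_lt hk⟩ := Fin.ext htk
        subst this
        rw [upd2_left]; exact h1
      · by_cases htk1 : t.1 = k+1
        · have : t = ⟨k+1, hk⟩ := Fin.ext htk1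
          subst this
          rw [upd2_right]; exact h2
        · rw [upd2_other k hk f p.1 p.2 t (by simp <;> omega)]
          exact h3 t (by simp <;> omega)
  rw [Finset.sum_congr rfl (fun p _ => by rw [key p])]
  rw [Fintype.sum_prod_type]
  have inner : ∀ a b : Fin n,
      A (f ⟨k, Nat.lt_of_succ_lt hk⟩, f ⟨k+1, hk⟩) (a, b) *
        (A' (f ⟨l, Nat.lt_of_succ_lt hl⟩, f ⟨l+1, hl⟩)
           (g ⟨l, Nat.lt_of_succ_lt hl⟩, g ⟨l+1, hl⟩) *
        ((if a = g ⟨k, Nat.lt_of_succ_lt hk⟩ then (1:ℂ) else 0) *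
         (if b = g ⟨k+1, hk⟩ then (1:ℂ) else 0) *
         (if (∀ t : Fin m, ¬(t.1 = k ∨ t.1 = k+1 ∨ t.1 = l ∨ t.1 = l+1) → f t = g t)
            then (1:ℂ) else 0)))
      = (if a = g ⟨k, Nat.lt_of_succ_lt hk⟩ then
          (if b = g ⟨k+1, hk⟩ then
            A (f ⟨k, Nat.lt_of_succ_lt hk⟩, f ⟨k+1, hk⟩) (a, b) *
            A' (f ⟨l, Nat.lt_of_succ_lt hl⟩, f ⟨l+1, hl⟩)
               (g ⟨l, Nat.lt_of_succ_lt hl⟩, g ⟨l+1, hl⟩) *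
            (if (∀ t : Fin m, ¬(t.1 = k ∨ t.1 = k+1 ∨ t.1 = l ∨ t.1 = l+1) → f t = g t)
              then (1:ℂ) else 0) else 0) else 0) := by
    intro a b
    by_cases h1 : a = g ⟨k, Nat.lt_of_succ_lt hk⟩ <;>
      by_cases h2 : b = g ⟨k+1, hk⟩ <;> simp [h1, h2] <;> ring
  simp only [inner]
  simp

lemma site_commute (A A' : Matrix (Fin n × Fin n) (Fin n × Fin n) ℂ) (k l : ℕ)
    (h : k + 2 ≤ l) :
    site n m A k * site n m A' l = site n m A' l * site n m A k := by
  by_cases hl : l + 1 < m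
  · have hk : k + 1 < m := by omega
    ext f g
    rw [site_mul_site A A' k l hk hl (Or.inl h) f g,
      site_mul_site A' A l k hl hk (Or.inr h) f g]
    have hiff : (∀ t : Fin m, ¬(t.1 = l ∨ t.1 = l+1 ∨ t.1 = k ∨ t.1 = k+1) → f t = g t)
        ↔ (∀ t : Fin m, ¬(t.1 = k ∨ t.1 = k+1 ∨ t.1 = l ∨ t.1 = l+1) → f t = g t) := by
      constructor <;> intro H t ht <;> exact H t (by tauto)
    rw [if_congr hiff rfl rfl]
    ring
  · rw [site_one A' l hl, mul_one, one_mul]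

end

noncomputable section
variable {n m : ℕ}

lemma qybe_entry (R : Fin n → Fin n → Fin n → Fin n → ℂ) (hR : QYBE n R)
    (x y z u v w : Fin n) :
    ∑ a : Fin n, ∑ b : Fin n, ∑ c : Fin n, R x c y a * R c u z b * R a v b w
      = ∑ a : Fin n, ∑ b : Fin n, ∑ c : Fin n, R y b z c * R x a c w * R a u b v := by
  have h : (Rmat12 n R * Rmat13 n R * Rmat23 n R) (x,y,z) (u,v,w)
      = (Rmat23 n R * Rmat13 n R * Rmat12 n R) (x,y,z) (u,v,w) := by rw [hR]
  simp only [Matrix.mul_apply, Rmat12, Rmat13, Rmat23, Matrix.of_apply,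
    Fintype.sum_prod_type, mul_ite, mul_one, mul_zero, ite_mul, zero_mul, one_mul,
    Finset.sum_ite_eq, Finset.sum_ite_eq', Finset.mem_univ, if_true,
    Finset.sum_ite_irrel, Finset.sum_const_zero,
    Finset.mul_sum, Finset.sum_mul] at h
  exact h

end

noncomputable section
variable {n m : ℕ}

lemma ite_and2 (P Q : Prop) [Decidable P] [Decidable Q] :
    (if P ∧ Q then (1:ℂ) else 0) = (if P then 1 else 0) * (if Q then 1 else 0) := by
  by_cases hP : P <;> by_cases hQ : Q <;> simp [hP, hQ]

lemma site_braid (R : Fin n → Fin n → Fin n → Fin n → ℂ) (hR : QYBE n R) (k : ℕ)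
    (hk2 : k + 2 < m) :
    site n m (PRmat n R) k * site n m (PRmat n R) (k+1) * site n m (PRmat n R) k
      = site n m (PRmat n R) (k+1) * site n m (PRmat n R) k * site n m (PRmat n R) (k+1) := by
  have hk : k + 1 < m := Nat.lt_of_succ_lt hk2
  have hk1 : (k+1) + 1 < m := hk2
  have hkm : k < m := Nat.lt_of_succ_lt hk
  have hk2m : k + 2 < m := hk2
  ext f g
  rw [mul_site_apply _ k hk, mul_site_apply _ (k+1) hk1]
  have expandL : ∀ p : Fin n × Fin n,
      (site n m (PRmat n R) k * site n m (PRmat n R) (k+1)) f (upd2 k hk g p.1 p.2)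
      = ∑ q : Fin n × Fin n, PRmat n R (f ⟨k, hkm⟩, f ⟨k+1, hk⟩) q *
          (PRmat n R (q.2, f ⟨k+2, hk2m⟩) (p.2, g ⟨k+2, hk2m⟩) *
           ((if q.1 = p.1 then (1:ℂ) else 0) *
            (if (∀ t : Fin m, ¬(t.1 = k ∨ t.1 = k+1 ∨ t.1 = k+2) → f t = g t)
              then (1:ℂ) else 0))) := by
    intro p
    rw [site_mul_apply _ k hk]
    apply Finset.sum_congr rfl
    intro q _
    congr 1
    rw [site_apply _ (k+1) hk1]
    rw [show upd2 k hk f q.1 q.2 ⟨k+1, Nat.lt_of_succ_lt hk1⟩ = q.2 from upd2_right k hk f q.1 q.2,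
      show upd2 k hk f q.1 q.2 ⟨k+1+1, hk1⟩ = f ⟨k+2, hk2m⟩ from
        upd2_other k hk f q.1 q.2 _ (by simp <;> omega),
      show upd2 k hk g p.1 p.2 ⟨k+1, Nat.lt_of_succ_lt hk1⟩ = p.2 from upd2_right k hk g p.1 p.2,
      show upd2 k hk g p.1 p.2 ⟨k+1+1, hk1⟩ = g ⟨k+2, hk2m⟩ from
        upd2_other k hk g p.1 p.2 _ (by simp <;> omega)]
    congr 1
    rw [← ite_and2]
    apply if_congr _ rfl rfl
    constructor
    · intro H
      constructor
      · have h1 := H ⟨k, hkm⟩ (by simp <;> omega)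
        rwa [upd2_left, upd2_left] at h1
      · intro t ht
        push_neg at ht
        have h1 := H t (by simp <;> omega)
        rwa [upd2_other k hk f q.1 q.2 t (by simp <;> omega),
          upd2_other k hk g p.1 p.2 t (by simp <;> omega)] at h1
    · rintro ⟨h1, h2⟩ t ht
      push_neg at ht
      by_cases htk : t.1 = k
      · have : t = ⟨k, hkm⟩ := Fin.ext htk
        subst this
        rw [upd2_left, upd2_left]; exact h1
      · rw [upd2_other k hk f q.1 q.2 t (by simp <;> omega),
          upd2_other k hk g p.1 p.2 t (by simp <;> omega)]
        exact h2 t (by simp <;> omega)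
  have expandR : ∀ p : Fin n × Fin n,
      (site n m (PRmat n R) (k+1) * site n m (PRmat n R) k) f (upd2 (k+1) hk1 g p.1 p.2)
      = ∑ q : Fin n × Fin n, PRmat n R (f ⟨k+1, hk⟩, f ⟨k+2, hk2m⟩) q *
          (PRmat n R (f ⟨k, hkm⟩, q.1) (g ⟨k, hkm⟩, p.1) *
           ((if q.2 = p.2 then (1:ℂ) else 0) *
            (if (∀ t : Fin m, ¬(t.1 = k ∨ t.1 = k+1 ∨ t.1 = k+2) → f t = g t)
              then (1:ℂ) else 0))) := by
    intro p
    rw [site_mul_apply _ (k+1) hk1]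
    apply Finset.sum_congr rfl
    intro q _
    congr 1
    rw [site_apply _ k hk]
    rw [show upd2 (k+1) hk1 f q.1 q.2 ⟨k, Nat.lt_of_succ_lt hk⟩ = f ⟨k, hkm⟩ from
        upd2_other (k+1) hk1 f q.1 q.2 _ (by simp <;> omega),
      show upd2 (k+1) hk1 f q.1 q.2 ⟨k+1, hk⟩ = q.1 from upd2_left (k+1) hk1 f q.1 q.2,
      show upd2 (k+1) hk1 g p.1 p.2 ⟨k, Nat.lt_of_succ_lt hk⟩ = g ⟨k, hkm⟩ from
        upd2_other (k+1) hk1 g p.1 p.2 _ (by simp <;> omega),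
      show upd2 (k+1) hk1 g p.1 p.2 ⟨k+1, hk⟩ = p.1 from upd2_left (k+1) hk1 g p.1 p.2]
    congr 1
    rw [← ite_and2]
    apply if_congr _ rfl rfl
    constructor
    · intro H
      constructor
      · have h1 := H ⟨k+2, hk2m⟩ (by simp <;> omega)
        rwa [show (⟨k+2, hk2m⟩ : Fin m) = ⟨k+1+1, hk1⟩ from rfl, upd2_right, upd2_right] at h1
      · intro t ht
        push_neg at ht
        have h1 := H t (by simp <;> omega)
        rwa [upd2_other (k+1) hk1 f q.1 q.2 t (by simp <;> omega),
          upd2_other (k+1) hk1 g p.1 p.2 t (by simp <;> omega)] at h1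
    · rintro ⟨h1, h2⟩ t ht
      push_neg at ht
      by_cases htk : t.1 = k + 2
      · have : t = ⟨k+1+1, hk1⟩ := Fin.ext htk
        subst this
        rw [upd2_right, upd2_right]; exact h1
      · rw [upd2_other (k+1) hk1 f q.1 q.2 t (by simp <;> omega),
          upd2_other (k+1) hk1 g p.1 p.2 t (by simp <;> omega)]
        exact h2 t (by simp <;> omega)
  simp only [expandL, expandR]
  simp only [PRmat, Matrix.of_apply, Fintype.sum_prod_type, mul_ite, mul_one, mul_zero,
    ite_mul, zero_mul, one_mul, Finset.sum_ite_eq, Finset.sum_ite_eq', Finset.mem_univ,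
    if_true, Finset.sum_ite_irrel, Finset.sum_const_zero, Finset.mul_sum, Finset.sum_mul]
  by_cases hC : (∀ t : Fin m, ¬(t.1 = k ∨ t.1 = k+1 ∨ t.1 = k+2) → f t = g t)
  · rw [if_pos hC, if_pos hC]
    have h := qybe_entry R hR (f ⟨k+2, hk2m⟩) (f ⟨k+1, hk⟩) (f ⟨k, hkm⟩)
      (g ⟨k, hkm⟩) (g ⟨k+1, hk⟩) (g ⟨k+2, hk2m⟩)
    rw [Finset.sum_comm]
    conv_rhs => rw [Finset.sum_comm]
    exact h.symm
  · rw [if_neg hC, if_neg hC]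

end

section BraidAlg2
variable {A : Type*} [Ring A] (B : ℕ → A)

lemma revChain_eq_dscP : ∀ r t : ℕ, r ≤ t + 1 →
    ((List.range r).map fun s => B (t - s)).prod = dscP B (t+1-r) r := by
  intro r
  induction r with
  | zero => intro t _; simp [dscP]
  | succ r ih =>
      intro t ht
      rcases Nat.eq_zero_or_pos t with rfl | htpos
      · obtain rfl : r = 0 := by omega
        simp [dscP, List.range_succ]
      rw [List.range_succ_eq_map]
      simp only [List.map_cons, List.prod_cons, List.map_map, Function.comp_def, Nat.sub_zero]
      have hmap : (((List.range r).map fun s => B (t - (s+1)))).prod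
          = ((List.range r).map fun s => B ((t-1) - s)).prod := by
        congr 1
        apply List.map_congr_left
        intro s _
        congr 1
        omega
      have e1 : (t-1)+1-r = t - r := by omega
      have e2 : t+1-(r+1) = t - r := by omega
      have e3 : t - r + r = t := by omega
      rw [hmap, ih (t-1) (by omega), e1, e2, dscP_cons, e3]
end BraidAlg2

noncomputable section
variable {n m : ℕ}

def revE (m n : ℕ) : (Fin m → Fin n) ≃ (Fin m → Fin n) where
  toFun f := fun t => f t.rev
  invFun f := fun t => f t.rev
  left_inv f := by funext t; simp
  right_inv f := by funext t; simp

lemma reindex_site (A : Matrix (Fin n × Fin n) (Fin n × Fin n) ℂ) (k k' : ℕ)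
    (hkk : k + k' + 2 = m) :
    (Matrix.reindexAlgEquiv ℂ ℂ (revE m n)) (site n m A k)
      = site n m (Matrix.of fun p q => A (p.2, p.1) (q.2, q.1)) k' := by
  have hk : k + 1 < m := by omega
  have hk' : k' + 1 < m := by omega
  ext f g
  rw [Matrix.reindexAlgEquiv_apply, Matrix.reindex_apply, Matrix.submatrix_apply]
  rw [site_apply A k hk, site_apply _ k' hk']
  have e1 : ∀ (h : Fin m → Fin n) (t : Fin m), (revE m n).symm h t = h t.rev :=
    fun _ _ => rfl
  have hrev1 : (⟨k, Nat.lt_of_succ_lt hk⟩ : Fin m).rev = ⟨k'+1, hk'⟩ := by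
    apply Fin.ext
    rw [Fin.val_rev]
    simp
    omega
  have hrev2 : (⟨k+1, hk⟩ : Fin m).rev = ⟨k', Nat.lt_of_succ_lt hk'⟩ := by
    apply Fin.ext
    rw [Fin.val_rev]
    simp
    omega
  simp only [e1, hrev1, hrev2, Matrix.of_apply]
  congr 1
  apply if_congr _ rfl rfl
  constructor
  · intro H t ht
    have h1 := H t.rev (by rw [Fin.val_rev]; push_neg at ht ⊢; omega)
    rwa [Fin.rev_rev] at h1
  · intro H t ht
    exact H t.rev (by rw [Fin.val_rev]; push_neg at ht ⊢; constructor <;> omega)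

end


noncomputable section

variable {n m : ℕ}

lemma PRmat_swap (R : Fin n → Fin n → Fin n → Fin n → ℂ) :
    (Matrix.of fun p q => PRmat n (swapR n R) (p.2, p.1) (q.2, q.1)) = PRmat n R := by
  ext ⟨p1, p2⟩ ⟨q1, q2⟩
  simp [PRmat, swapR]

lemma bf_eq (R : Fin n → Fin n → Fin n → Fin n → ℂ) (N : ℕ) (hm : m = N + 2) :
    braidedFact n m R = PPdP (fun j => site n m (PRmat n R) j) N (N+1) := by
  subst hm
  unfold braidedFact PPdP
  rw [show N + 2 - 1 = N + 1 by omega]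
  congr 1
  apply List.map_congr_left
  intro t ht
  rw [show N + 2 - (t+2) = N - t by omega]
  rfl

lemma bf_rev (R : Fin n → Fin n → Fin n → Fin n → ℂ) (N : ℕ) (hm : m = N + 2) :
    (Matrix.reindexAlgEquiv ℂ ℂ (revE m n)) (braidedFact n m (swapR n R))
      = ((List.range (N+1)).map
          fun t => KTP (fun j => site n m (PRmat n R) j) (t+1) (t+1)).prod := by
  subst hm
  unfold braidedFact
  rw [map_list_prod, List.map_map, show N + 2 - 1 = N + 1 by omega]
  congr 1
  apply List.map_congr_left
  intro t ht
  rw [List.mem_range] at ht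
  simp only [Function.comp_apply]
  unfold braidedInt KTP
  rw [map_sum]
  apply Finset.sum_congr rfl
  intro r hr
  rw [Finset.mem_range] at hr
  unfold chain
  rw [map_list_prod, List.map_map, ← revChain_eq_dscP _ r t (by omega)]
  congr 1
  apply List.map_congr_left
  intro s hs
  rw [List.mem_range] at hs
  simp only [Function.comp_apply]
  rw [reindex_site (PRmat n (swapR n R)) (N + 2 - (t+2) + s) (t - s) (by omega),
    PRmat_swap]

/-- if `R` obeys the QYBE, then for every `m ≥ 1`,
`([m;R]!)^{j_1⋯j_m}_{i_1⋯i_m} = ([m;R₂₁]!)^{j_m⋯j_1}_{i_m⋯i_1}`. -/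
theorem stmt11 (n : ℕ) (hn : 1 ≤ n)
    (R : Fin n → Fin n → Fin n → Fin n → ℂ) (hR : QYBE n R)
    (m : ℕ) (hm : 1 ≤ m) (j i : Fin m → Fin n) :
    braidedFact n m R j i =
      braidedFact n m (swapR n R) (fun t => j t.rev) (fun t => i t.rev) := by
  by_cases hm1 : m = 1
  · subst hm1
    have hiff : ((fun t : Fin 1 => j t.rev) = fun t => i t.rev) ↔ j = i := by
      constructor
      · intro h
        funext t
        have := congrFun h t.rev
        simpa using this
      · rintro rfl; rfl
    simp [braidedFact, Matrix.one_apply, hiff]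
  · obtain ⟨N, rfl⟩ : ∃ N, m = N + 2 := ⟨m - 2, by omega⟩
    have hbr : ∀ k, k + 1 ≤ N →
        site n (N+2) (PRmat n R) k * site n (N+2) (PRmat n R) (k+1) *
          site n (N+2) (PRmat n R) k
        = site n (N+2) (PRmat n R) (k+1) * site n (N+2) (PRmat n R) k *
          site n (N+2) (PRmat n R) (k+1) :=
      fun k hk => site_braid R hR k (by omega)
    have hcm : ∀ k l, k + 2 ≤ l →
        site n (N+2) (PRmat n R) k * site n (N+2) (PRmat n R) l
        = site n (N+2) (PRmat n R) l * site n (N+2) (PRmat n R) k :=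
      fun k l hkl => site_commute _ _ k l hkl
    have key : braidedFact n (N+2) R
        = (Matrix.reindexAlgEquiv ℂ ℂ (revE (N+2) n)) (braidedFact n (N+2) (swapR n R)) := by
      rw [bf_eq R N rfl, bf_rev R N rfl,
        theoremGN (fun j => site n (N+2) (PRmat n R) j) N hbr hcm]
    rw [key]
    rfl

end
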